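/- arXiv:0705.2874 — 3 statements merged into one kernel-verified Lean document; each statement's English description precedes it below -/
import Mathlib

section
/- Let K be a finite abstract simplicial complex, f a discrete Morse function on K, and σ a face of K of dimension p. Then at least one of the two sets {τ > σ : dim τ = p+1, f(τ) ≤ f(σ)} and {ν < σ : dim ν = p−1, f(σ) ≤ f(ν)} is empty. -/
/-- A finite abstract simplicial complex on a vertex type `V`: a finite family of
finite nonempty faces, closed under passing to nonempty subsets. -/
structure FinSimplicialComplex (V : Type) [DecidableEq V] where
  faces : Finset (Finset V)
  nonempty_of_mem : ∀ σ ∈ faces, σ.Nonempty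
  down_closed : ∀ σ ∈ faces, ∀ τ : Finset V, τ ⊆ σ → τ.Nonempty → τ ∈ faces

variable {V : Type} [DecidableEq V]

/-- `f` is a discrete Morse function on `K`: for each face `σ` (of dimension
`p = σ.card - 1`), there is at most one cofacet `τ > σ` of dimension `p+1` with
`f τ ≤ f σ`, and at most one facet `ν < σ` of dimension `p-1` with `f σ ≤ f ν`. -/
def IsDiscreteMorse (K : FinSimplicialComplex V) (f : Finset V → ℝ) : Prop :=
  ∀ σ ∈ K.faces,
    {τ : Finset V | τ ∈ K.faces ∧ σ ⊂ τ ∧ τ.card = σ.card + 1 ∧ f τ ≤ f σ}.ncard ≤ 1 ∧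
    {ν : Finset V | ν ∈ K.faces ∧ ν ⊂ σ ∧ ν.card + 1 = σ.card ∧ f σ ≤ f ν}.ncard ≤ 1

/-- For a discrete Morse function, at least one of the two exceptional sets of any
face is empty. -/
theorem discreteMorse_one_side_empty (K : FinSimplicialComplex V) (f : Finset V → ℝ)
    (hf : IsDiscreteMorse K f) (σ : Finset V) (hσ : σ ∈ K.faces) :
    {τ : Finset V | τ ∈ K.faces ∧ σ ⊂ τ ∧ τ.card = σ.card + 1 ∧ f τ ≤ f σ} = ∅ ∨
    {ν : Finset V | ν ∈ K.faces ∧ ν ⊂ σ ∧ ν.card + 1 = σ.card ∧ f σ ≤ f ν} = ∅ := by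
  by_contra hcon
  push_neg at hcon
  obtain ⟨h1, h2⟩ := hcon
  obtain ⟨τ, hτK, hστ, hcτ, hfτ⟩ := h1
  obtain ⟨ν, hνK, hνσ, hcν, hfν⟩ := h2
  -- extract the single vertices
  have hνσ' : ν ⊆ σ := hνσ.subset
  have hστ' : σ ⊆ τ := hστ.subset
  have hca : (σ \ ν).card = 1 := by
    rw [Finset.card_sdiff_of_subset hνσ']; omega
  have hcb : (τ \ σ).card = 1 := by
    rw [Finset.card_sdiff_of_subset hστ']; omega
  obtain ⟨a, ha⟩ := Finset.card_eq_one.mp hca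
  obtain ⟨b, hb⟩ := Finset.card_eq_one.mp hcb
  have haσ : a ∈ σ ∧ a ∉ ν := by
    have : a ∈ σ \ ν := ha ▸ Finset.mem_singleton_self a
    exact ⟨(Finset.mem_sdiff.mp this).1, (Finset.mem_sdiff.mp this).2⟩
  have hbτ : b ∈ τ ∧ b ∉ σ := by
    have : b ∈ τ \ σ := hb ▸ Finset.mem_singleton_self b
    exact ⟨(Finset.mem_sdiff.mp this).1, (Finset.mem_sdiff.mp this).2⟩
  have hbν : b ∉ ν := fun h => hbτ.2 (hνσ' h)
  have hab : a ≠ b := fun h => hbτ.2 (h ▸ haσ.1)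
  set σ' : Finset V := insert b ν with hσ'def
  have hσ'sub : σ' ⊆ τ := by
    intro x hx
    rcases Finset.mem_insert.mp hx with h | h
    · exact h ▸ hbτ.1
    · exact hστ' (hνσ' h)
  have hσ'K : σ' ∈ K.faces :=
    K.down_closed τ hτK σ' hσ'sub ⟨b, Finset.mem_insert_self b ν⟩
  have hσ'card : σ'.card = ν.card + 1 := Finset.card_insert_of_notMem hbν
  have hσ'ne : σ' ≠ σ := fun h => hbτ.2 (h ▸ Finset.mem_insert_self b ν)
  have hνσ'' : ν ⊂ σ' := Finset.ssubset_insert hbν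
  have hσ'τ : σ' ⊂ τ := by
    refine Finset.ssubset_iff_of_subset hσ'sub |>.mpr ⟨a, hστ' haσ.1, ?_⟩
    intro h
    rcases Finset.mem_insert.mp h with h | h
    · exact hab h
    · exact haσ.2 h
  have hτfin : {x : Finset V | x ∈ K.faces ∧ x ⊂ τ ∧ x.card + 1 = τ.card ∧ f τ ≤ f x}.Finite :=
    Set.Finite.subset K.faces.finite_toSet (fun x hx => hx.1)
  have hνfin : {x : Finset V | x ∈ K.faces ∧ ν ⊂ x ∧ x.card = ν.card + 1 ∧ f x ≤ f ν}.Finite :=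
    Set.Finite.subset K.faces.finite_toSet (fun x hx => hx.1)
  by_cases hc : f τ ≤ f σ'
  · -- both σ and σ' are facets of τ with f τ ≤ f ·
    have hle := (hf τ hτK).2
    have hσmem : σ ∈ {x : Finset V | x ∈ K.faces ∧ x ⊂ τ ∧ x.card + 1 = τ.card ∧ f τ ≤ f x} :=
      ⟨hσ, hστ, by omega, hfτ⟩
    have hσ'mem : σ' ∈ {x : Finset V | x ∈ K.faces ∧ x ⊂ τ ∧ x.card + 1 = τ.card ∧ f τ ≤ f x} :=
      ⟨hσ'K, hσ'τ, by omega, hc⟩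
    exact hσ'ne ((Set.ncard_le_one hτfin).mp hle σ' hσ'mem σ hσmem)
  · -- both σ and σ' are cofacets of ν with f · ≤ f ν
    push_neg at hc
    have hle := (hf ν hνK).1
    have hσmem : σ ∈ {x : Finset V | x ∈ K.faces ∧ ν ⊂ x ∧ x.card = ν.card + 1 ∧ f x ≤ f ν} :=
      ⟨hσ, hνσ, by omega, hfν⟩
    have hσ'mem : σ' ∈ {x : Finset V | x ∈ K.faces ∧ ν ⊂ x ∧ x.card = ν.card + 1 ∧ f x ≤ f ν} :=
      ⟨hσ'K, hνσ'', by omega, le_of_lt (lt_of_lt_of_le hc (le_trans hfτ hfν))⟩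
    exact hσ'ne ((Set.ncard_le_one hνfin).mp hle σ' hσ'mem σ hσmem)
end

section
/- Let K be a finite abstract simplicial complex. A discrete vector field V on K is the gradient vector field of some discrete Morse function on K if and only if there are no nontrivial closed V-paths. -/
variable {V : Type} [DecidableEq V]

/-- The gradient vector field of a discrete Morse function `f`. -/
def gradField (K : FinSimplicialComplex V) (f : Finset V → ℝ) :
    Set (Finset V × Finset V) :=
  {p | p.1 ∈ K.faces ∧ p.2 ∈ K.faces ∧ p.1 ⊂ p.2 ∧ p.2.card = p.1.card + 1 ∧
    f p.2 ≤ f p.1}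

/-- `W` is a discrete vector field on `K`: a set of pairs `(σ, τ)` of faces with
`σ < τ`, `dim τ = dim σ + 1`, such that each face belongs to at most one pair. -/
def IsDiscreteVectorField (K : FinSimplicialComplex V)
    (W : Set (Finset V × Finset V)) : Prop :=
  (∀ p ∈ W, p.1 ∈ K.faces ∧ p.2 ∈ K.faces ∧ p.1 ⊂ p.2 ∧ p.2.card = p.1.card + 1) ∧
  ∀ p ∈ W, ∀ q ∈ W, ∀ σ : Finset V,
    (σ = p.1 ∨ σ = p.2) → (σ = q.1 ∨ σ = q.2) → p = q

/-- `W` admits a nontrivial closed `W`-path: a sequence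
`σ₀, τ₀, σ₁, τ₁, …, τ_r, σ_{r+1}` with `(σᵢ, τᵢ) ∈ W`, `σ_{i+1} < τᵢ` of
codimension one, `σ_{i+1} ≠ σᵢ`, and `σ₀ = σ_{r+1}`. -/
def HasNontrivialClosedPath (W : Set (Finset V × Finset V)) : Prop :=
  ∃ (r : ℕ) (σ τ : ℕ → Finset V),
    (∀ i ≤ r, (σ i, τ i) ∈ W) ∧
    (∀ i ≤ r, σ (i + 1) ⊂ τ i ∧ (σ (i + 1)).card + 1 = (τ i).card ∧ σ (i + 1) ≠ σ i) ∧
    σ 0 = σ (r + 1)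

/-! ### Auxiliary machinery for the converse direction -/

open Classical in
/-- Canonical representative: the lower face of the matched pair containing `x`
(if `x` is the upper face of a pair), otherwise `x` itself. -/
noncomputable def repFace (W : Set (Finset V × Finset V)) (x : Finset V) : Finset V :=
  if h : ∃ y, (y, x) ∈ W then h.choose else x

lemma repFace_cases (W : Set (Finset V × Finset V)) (x : Finset V) :
    repFace W x = x ∨ (repFace W x, x) ∈ W := by
  unfold repFace
  split
  · next h => exact Or.inr h.choose_spec
  · exact Or.inl rfl

lemma repFace_of_pair {K : FinSimplicialComplex V} {W : Set (Finset V × Finset V)}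
    (hW : IsDiscreteVectorField K W) {σ τ : Finset V} (h : (σ, τ) ∈ W) :
    repFace W τ = σ := by
  have hex : ∃ y, (y, τ) ∈ W := ⟨σ, h⟩
  unfold repFace
  rw [dif_pos hex]
  have hc := hex.choose_spec
  have := hW.2 _ hc _ h τ (Or.inr rfl) (Or.inr rfl)
  exact congrArg Prod.fst this

lemma repFace_of_lower {K : FinSimplicialComplex V} {W : Set (Finset V × Finset V)}
    (hW : IsDiscreteVectorField K W) {σ τ : Finset V} (h : (σ, τ) ∈ W) :
    repFace W σ = σ := by
  rcases repFace_cases W σ with h1 | h1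
  · exact h1
  · have h2 := hW.2 _ h1 _ h σ (Or.inr rfl) (Or.inl rfl)
    have h3 : σ = τ := congrArg Prod.snd h2
    exact absurd h3 (hW.1 _ h).2.2.1.ne

/-- Edges of the "modified Hasse diagram" between representatives. -/
def HasseRel (K : FinSimplicialComplex V) (W : Set (Finset V × Finset V))
    (a b : Finset V) : Prop :=
  ∃ σ τ : Finset V, σ ∈ K.faces ∧ τ ∈ K.faces ∧ σ ⊂ τ ∧ τ.card = σ.card + 1 ∧
    (σ, τ) ∉ W ∧ repFace W σ = a ∧ repFace W τ = b

lemma hasseRel_mem {K : FinSimplicialComplex V} {W : Set (Finset V × Finset V)}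
    (hW : IsDiscreteVectorField K W) {a b : Finset V} (h : HasseRel K W a b) :
    a ∈ K.faces ∧ b ∈ K.faces := by
  obtain ⟨σ, τ, hσ, hτ, _, _, _, ha, hb⟩ := h
  constructor
  · rcases repFace_cases W σ with h1 | h1
    · rw [← ha, h1]; exact hσ
    · rw [← ha]; exact (hW.1 _ h1).1
  · rcases repFace_cases W τ with h1 | h1
    · rw [← hb, h1]; exact hτ
    · rw [← hb]; exact (hW.1 _ h1).1

lemma hasseRel_card_le {K : FinSimplicialComplex V} {W : Set (Finset V × Finset V)}
    (hW : IsDiscreteVectorField K W) {a b : Finset V} (h : HasseRel K W a b) :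
    a.card ≤ b.card := by
  obtain ⟨σ, τ, hσ, hτ, hst, hcard, hnW, ha, hb⟩ := h
  have h1 : a.card ≤ σ.card := by
    rcases repFace_cases W σ with h1 | h1
    · rw [← ha, h1]
    · have h2 : σ.card = (repFace W σ).card + 1 := (hW.1 _ h1).2.2.2
      rw [ha] at h2
      omega
  have h2 : σ.card ≤ b.card := by
    rcases repFace_cases W τ with h2 | h2
    · rw [← hb, h2]; omega
    · have h3 : τ.card = (repFace W τ).card + 1 := (hW.1 _ h2).2.2.2
      rw [hb] at h3
      omega
  omega

lemma hasseRel_eq_case {K : FinSimplicialComplex V} {W : Set (Finset V × Finset V)}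
    (hW : IsDiscreteVectorField K W) {a b : Finset V} (h : HasseRel K W a b)
    (hc : b.card ≤ a.card) :
    ∃ τ, a ∈ K.faces ∧ τ ∈ K.faces ∧ a ⊂ τ ∧ τ.card = a.card + 1 ∧
      (a, τ) ∉ W ∧ (b, τ) ∈ W := by
  obtain ⟨σ, τ, hσ, hτ, hst, hcard, hnW, ha, hb⟩ := h
  have haσ : a = σ := by
    rcases repFace_cases W σ with h1 | h1
    · rw [← ha, h1]
    · exfalso
      rw [ha] at h1
      have h2 : σ.card = a.card + 1 := (hW.1 _ h1).2.2.2
      -- σ.card = a.card + 1, but σ.card ≤ b.card ≤ a.card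
      have h3 : σ.card ≤ b.card := by
        rcases repFace_cases W τ with h4 | h4
        · rw [← hb, h4]; omega
        · rw [hb] at h4
          have h5 : τ.card = b.card + 1 := (hW.1 _ h4).2.2.2
          omega
      omega
  subst haσ
  rcases repFace_cases W τ with h1 | h1
  · exfalso
    rw [hb] at h1
    subst h1
    omega
  · rw [hb] at h1
    exact ⟨τ, hσ, hτ, hst, hcard, hnW, h1⟩

lemma chain_of_transGen {α : Type*} {R : α → α → Prop} {a b : α}
    (h : Relation.TransGen R a b) :
    ∃ n : ℕ, 0 < n ∧ ∃ c : ℕ → α, c 0 = a ∧ c n = b ∧ ∀ i < n, R (c i) (c (i + 1)) := by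
  induction h with
  | single hr =>
      rename_i b'
      refine ⟨1, one_pos, fun i => if i = 0 then a else b', by simp, by simp, ?_⟩
      intro i hi
      interval_cases i
      simpa using hr
  | tail hab hbc ih =>
      rename_i b' c'
      obtain ⟨n, hn, ch, hc0, hcn, hstep⟩ := ih
      refine ⟨n + 1, by omega, fun i => if i ≤ n then ch i else c', ?_, ?_, ?_⟩
      · simp [hc0]
      · simp
      · intro i hi
        by_cases h1 : i < n
        · have e1 : i ≤ n := by omega
          have e2 : i + 1 ≤ n := by omega
          simp only [if_pos e1, if_pos e2]
          exact hstep i h1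
        · have e0 : i = n := by omega
          subst e0
          have e1 : i ≤ i := le_refl i
          have e2 : ¬ (i + 1 ≤ i) := by omega
          simp only [if_pos e1, if_neg e2]
          rw [hcn]
          exact hbc

lemma no_hasse_cycle {K : FinSimplicialComplex V} {W : Set (Finset V × Finset V)}
    (hW : IsDiscreteVectorField K W) (hNC : ¬ HasNontrivialClosedPath W)
    (a : Finset V) : ¬ Relation.TransGen (HasseRel K W) a a := by
  intro h
  obtain ⟨n, hn, c, hc0, hcn, hstep⟩ := chain_of_transGen h
  have hcnc0 : c n = c 0 := by rw [hcn, hc0]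
  -- cards are monotone along the chain
  have mono : ∀ j ≤ n, ∀ i ≤ j, (c i).card ≤ (c j).card := by
    intro j
    induction j with
    | zero => intro _ i hi; interval_cases i; exact le_refl _
    | succ k ih =>
        intro hk i hi
        rcases Nat.lt_or_ge i (k + 1) with h1 | h1
        · have h2 : i ≤ k := by omega
          have h3 := ih (by omega) i h2
          have h4 := hasseRel_card_le hW (hstep k (by omega))
          omega
        · have : i = k + 1 := by omega
          subst this; exact le_refl _
  -- per-edge extraction
  have H : ∀ i, i < n → ∃ τ, (c i) ∈ K.faces ∧ τ ∈ K.faces ∧ c i ⊂ τ ∧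
      τ.card = (c i).card + 1 ∧ (c i, τ) ∉ W ∧ (c (i + 1), τ) ∈ W := by
    intro i hi
    apply hasseRel_eq_case hW (hstep i hi)
    have h1 : (c (i + 1)).card ≤ (c n).card := mono n (le_refl n) (i + 1) (by omega)
    have h2 : (c 0).card ≤ (c i).card := mono i (by omega) 0 (by omega)
    rw [hcnc0] at h1
    omega
  choose t ht1 ht2 ht3 ht4 ht5 ht6 using H
  apply hNC
  refine ⟨n - 1, fun j => c (n - j), fun j => if h : n - 1 - j < n then t (n - 1 - j) h else ∅,
    ?_, ?_, ?_⟩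
  · intro j hj
    have hlt : n - 1 - j < n := by omega
    have e1 : n - 1 - j + 1 = n - j := by omega
    simp only [dif_pos hlt]
    have := ht6 (n - 1 - j) hlt
    rwa [e1] at this
  · intro j hj
    have hlt : n - 1 - j < n := by omega
    have e1 : n - (j + 1) = n - 1 - j := by omega
    have e2 : n - 1 - j + 1 = n - j := by omega
    simp only [dif_pos hlt]
    rw [e1]
    refine ⟨ht3 _ hlt, by have := ht4 _ hlt; omega, ?_⟩
    intro heq
    -- c (n-1-j) = c (n-j), i.e., c i = c (i+1)
    have h6 := ht6 (n - 1 - j) hlt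
    rw [e2, ← heq] at h6
    exact ht5 _ hlt h6
  · have e1 : n - 0 = n := by omega
    have e2 : n - (n - 1 + 1) = 0 := by omega
    simp only [e1, e2]
    exact hcnc0

/-- Height function: number of faces strictly below `a` in the transitive closure. -/
noncomputable def htF (K : FinSimplicialComplex V) (W : Set (Finset V × Finset V))
    (a : Finset V) : ℕ :=
  {x : Finset V | x ∈ K.faces ∧ Relation.TransGen (HasseRel K W) x a}.ncard

lemma htF_lt {K : FinSimplicialComplex V} {W : Set (Finset V × Finset V)}
    (hW : IsDiscreteVectorField K W) (hNC : ¬ HasNontrivialClosedPath W)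
    {a b : Finset V} (h : Relation.TransGen (HasseRel K W) a b) :
    htF K W a < htF K W b := by
  have haf : a ∈ K.faces := by
    induction h with
    | single hr => exact (hasseRel_mem hW hr).1
    | tail _ _ ih => exact ih
  have finA : {x : Finset V | x ∈ K.faces ∧ Relation.TransGen (HasseRel K W) x a}.Finite :=
    K.faces.finite_toSet.subset (fun x hx => hx.1)
  have finB : {x : Finset V | x ∈ K.faces ∧ Relation.TransGen (HasseRel K W) x b}.Finite :=
    K.faces.finite_toSet.subset (fun x hx => hx.1)
  have hna : a ∉ {x : Finset V | x ∈ K.faces ∧ Relation.TransGen (HasseRel K W) x a} := by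
    intro hx
    exact no_hasse_cycle hW hNC a hx.2
  have hsub : insert a {x : Finset V | x ∈ K.faces ∧ Relation.TransGen (HasseRel K W) x a}
      ⊆ {x : Finset V | x ∈ K.faces ∧ Relation.TransGen (HasseRel K W) x b} := by
    intro x hx
    rcases hx with rfl | hx
    · exact ⟨haf, h⟩
    · exact ⟨hx.1, hx.2.trans h⟩
  have h1 := Set.ncard_insert_of_notMem hna finA
  have h2 := Set.ncard_le_ncard hsub finB
  unfold htF
  omega

/-- The Morse function built from a discrete vector field with no closed paths. -/
noncomputable def morseOf (K : FinSimplicialComplex V) (W : Set (Finset V × Finset V))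
    (x : Finset V) : ℝ :=
  (htF K W (repFace W x) : ℝ)

lemma morseOf_lt {K : FinSimplicialComplex V} {W : Set (Finset V × Finset V)}
    (hW : IsDiscreteVectorField K W) (hNC : ¬ HasNontrivialClosedPath W)
    {σ τ : Finset V} (hσ : σ ∈ K.faces) (hτ : τ ∈ K.faces) (hst : σ ⊂ τ)
    (hcard : τ.card = σ.card + 1) (hnW : (σ, τ) ∉ W) :
    morseOf K W σ < morseOf K W τ := by
  have hrel : HasseRel K W (repFace W σ) (repFace W τ) :=
    ⟨σ, τ, hσ, hτ, hst, hcard, hnW, rfl, rfl⟩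
  have := htF_lt hW hNC (Relation.TransGen.single hrel)
  unfold morseOf
  exact_mod_cast this

lemma morseOf_eq {K : FinSimplicialComplex V} {W : Set (Finset V × Finset V)}
    (hW : IsDiscreteVectorField K W) {σ τ : Finset V} (h : (σ, τ) ∈ W) :
    morseOf K W τ = morseOf K W σ := by
  unfold morseOf
  rw [repFace_of_pair hW h, repFace_of_lower hW h]

/-- A discrete vector field is the gradient vector field of a discrete Morse
function if and only if it has no nontrivial closed paths. -/
theorem gradField_iff_no_closed_path (K : FinSimplicialComplex V)
    (W : Set (Finset V × Finset V)) (hW : IsDiscreteVectorField K W) :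
    (∃ f : Finset V → ℝ, IsDiscreteMorse K f ∧ W = gradField K f) ↔
      ¬ HasNontrivialClosedPath W := by
  constructor
  · rintro ⟨f, hf, rfl⟩ ⟨r, σ, τ, hWp, hstep, hclose⟩
    have key : ∀ i ≤ r, f (σ (i + 1)) < f (σ i) := by
      intro i hi
      obtain ⟨h1, h2, h3⟩ := hstep i hi
      obtain ⟨hσf, hτf, hsub, hcard, hle⟩ := hWp i hi
      have hcard' : (τ i).card = (σ i).card + 1 := hcard
      have h2' : (σ (i + 1)).card + 1 = (τ i).card := h2
      have hne : (σ (i + 1)).Nonempty := by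
        have hp : 0 < (σ i).card := Finset.card_pos.mpr (K.nonempty_of_mem _ hσf)
        exact Finset.card_pos.mp (by omega)
      have hσ1f : σ (i + 1) ∈ K.faces := K.down_closed _ hτf _ h1.subset hne
      have hM := (hf _ hτf).2
      have hlt : f (σ (i + 1)) < f (τ i) := by
        by_contra hc
        push_neg at hc
        set S : Set (Finset V) :=
          {ν : Finset V | ν ∈ K.faces ∧ ν ⊂ τ i ∧ ν.card + 1 = (τ i).card ∧ f (τ i) ≤ f ν}
          with hS
        have hfin : S.Finite := K.faces.finite_toSet.subset (fun x hx => hx.1)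
        have hm1 : σ i ∈ S := ⟨hσf, hsub, by omega, hle⟩
        have hm2 : σ (i + 1) ∈ S := ⟨hσ1f, h1, h2', hc⟩
        have : 1 < S.ncard := (Set.one_lt_ncard hfin).mpr ⟨_, hm2, _, hm1, h3⟩
        omega
      exact lt_of_lt_of_le hlt hle
    have chain : ∀ k ≤ r, f (σ (k + 1)) < f (σ 0) := by
      intro k
      induction k with
      | zero => intro _; exact key 0 (by omega)
      | succ m ih =>
          intro hm
          exact lt_trans (key (m + 1) hm) (ih (by omega))
    have := chain r (le_refl r)
    rw [← hclose] at this
    exact lt_irrefl _ this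
  · intro hNC
    refine ⟨morseOf K W, ?_, ?_⟩
    · intro σ0 hσ0
      constructor
      · -- at most one upper
        have hsing : ∀ τ₁ ∈ {τ : Finset V | τ ∈ K.faces ∧ σ0 ⊂ τ ∧ τ.card = σ0.card + 1 ∧
            morseOf K W τ ≤ morseOf K W σ0},
            ∀ τ₂ ∈ {τ : Finset V | τ ∈ K.faces ∧ σ0 ⊂ τ ∧ τ.card = σ0.card + 1 ∧
            morseOf K W τ ≤ morseOf K W σ0}, τ₁ = τ₂ := by
          intro τ₁ h₁ τ₂ h₂
          have hp : ∀ τ' ∈ {τ : Finset V | τ ∈ K.faces ∧ σ0 ⊂ τ ∧ τ.card = σ0.card + 1 ∧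
              morseOf K W τ ≤ morseOf K W σ0}, (σ0, τ') ∈ W := by
            intro τ' h'
            by_contra hnW
            exact absurd h'.2.2.2
              (not_le.mpr (morseOf_lt hW hNC hσ0 h'.1 h'.2.1 h'.2.2.1 hnW))
          have e := hW.2 _ (hp τ₁ h₁) _ (hp τ₂ h₂) σ0 (Or.inl rfl) (Or.inl rfl)
          exact congrArg Prod.snd e
        by_contra hgt
        push_neg at hgt
        have hfin : {τ : Finset V | τ ∈ K.faces ∧ σ0 ⊂ τ ∧ τ.card = σ0.card + 1 ∧
            morseOf K W τ ≤ morseOf K W σ0}.Finite :=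
          K.faces.finite_toSet.subset (fun x hx => hx.1)
        obtain ⟨x, hx, y, hy, hxy⟩ := (Set.one_lt_ncard hfin).mp hgt
        exact hxy (hsing x hx y hy)
      · -- at most one lower
        have hsing : ∀ ν₁ ∈ {ν : Finset V | ν ∈ K.faces ∧ ν ⊂ σ0 ∧ ν.card + 1 = σ0.card ∧
            morseOf K W σ0 ≤ morseOf K W ν},
            ∀ ν₂ ∈ {ν : Finset V | ν ∈ K.faces ∧ ν ⊂ σ0 ∧ ν.card + 1 = σ0.card ∧
            morseOf K W σ0 ≤ morseOf K W ν}, ν₁ = ν₂ := by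
          intro ν₁ h₁ ν₂ h₂
          have hp : ∀ ν' ∈ {ν : Finset V | ν ∈ K.faces ∧ ν ⊂ σ0 ∧ ν.card + 1 = σ0.card ∧
              morseOf K W σ0 ≤ morseOf K W ν}, (ν', σ0) ∈ W := by
            intro ν' h'
            by_contra hnW
            exact absurd h'.2.2.2
              (not_le.mpr (morseOf_lt hW hNC h'.1 hσ0 h'.2.1 h'.2.2.1.symm hnW))
          have e := hW.2 _ (hp ν₁ h₁) _ (hp ν₂ h₂) σ0 (Or.inr rfl) (Or.inr rfl)
          exact congrArg Prod.fst e
        by_contra hgt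
        push_neg at hgt
        have hfin : {ν : Finset V | ν ∈ K.faces ∧ ν ⊂ σ0 ∧ ν.card + 1 = σ0.card ∧
            morseOf K W σ0 ≤ morseOf K W ν}.Finite :=
          K.faces.finite_toSet.subset (fun x hx => hx.1)
        obtain ⟨x, hx, y, hy, hxy⟩ := (Set.one_lt_ncard hfin).mp hgt
        exact hxy (hsing x hx y hy)
    · ext ⟨σ, τ⟩
      constructor
      · intro h
        obtain ⟨h1, h2, h3, h4⟩ := hW.1 _ h
        exact ⟨h1, h2, h3, h4, le_of_eq (morseOf_eq hW h)⟩
      · rintro ⟨h1, h2, h3, h4, h5⟩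
        by_contra hnW
        exact absurd h5 (not_le.mpr (morseOf_lt hW hNC h1 h2 h3 h4 hnW))
end

section
/- Let A be a central essential hyperplane arrangement in ℝ^n. Then for every chamber C of A and every unit vector v ∈ C, there exists an orthonormal basis e_1, …, e_n of ℝ^n which is generic with respect to A and satisfies e_1 = v. In particular, orthonormal bases generic with respect to A exist. -/
open Submodule Module
open scoped InnerProductSpace

noncomputable section

abbrev E (n : ℕ) := EuclideanSpace ℝ (Fin n)

/-- The complement of the union of the hyperplanes `ker ⟪α, ·⟫`, `α ∈ A`. -/
def hypComp (n : ℕ) (A : Finset (E n)) : Set (E n) :=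
  {x | ∀ α ∈ A, ⟪α, x⟫_ℝ ≠ 0}

/-- A chamber of the central arrangement with normals `A`: a connected component
of the complement of the union of the hyperplanes. -/
def IsChamber (n : ℕ) (A : Finset (E n)) (C : Set (E n)) : Prop :=
  ∃ x ∈ hypComp n A, C = connectedComponentIn (hypComp n A) x

/-- `V_i = span(e_1, …, e_i)` for a frame `b` (here `e_j = b (j-1)`). -/
def flagSub (n : ℕ) (b : Fin n → E n) (i : ℕ) : Submodule ℝ (E n) :=
  Submodule.span ℝ (b '' {j : Fin n | (j : ℕ) < i})

/-- The intersection `⋂_{α ∈ S} ker ⟪α, ·⟫` of a subfamily of the hyperplanes;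
these are the elements of the intersection lattice `L(A)` for `S ⊆ A`. -/
def interSub (n : ℕ) (S : Finset (E n)) : Submodule ℝ (E n) :=
  ⨅ α ∈ S, (ℝ ∙ α)ᗮ

/-- A frame `b` is generic with respect to the central arrangement with normals `A`
if each `V_i` meets each element `L ∈ L(A)` transversally:
`dim (V_i ∩ L) = max (0, i - codim L)` (truncated subtraction on `ℕ`). -/
def IsGenericFrame (n : ℕ) (A : Finset (E n)) (b : Fin n → E n) : Prop :=
  ∀ i : ℕ, 1 ≤ i → i ≤ n → ∀ S : Finset (E n), S ⊆ A →
    finrank ℝ ↥(flagSub n b i ⊓ interSub n S)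
      = i - (n - finrank ℝ ↥(interSub n S))

/-! ### Auxiliary lemmas -/

lemma finrank_E (n : ℕ) : finrank ℝ (E n) = n := finrank_euclideanSpace_fin

/-- A finite family of submodules none of which contains `W` cannot cover `W`. -/
lemma avoid {n : ℕ} (W : Submodule ℝ (E n)) {ι : Type} [Finite ι]
    (p : ι → Submodule ℝ (E n)) (hp : ∀ i, ¬ W ≤ p i) :
    ∃ x ∈ W, ∀ i, x ∉ p i := by
  by_contra h
  push_neg at h
  have hcover : (⋃ i, (((p i).comap W.subtype : Submodule ℝ W) : Set W)) = Set.univ := by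
    ext y
    simp only [Set.mem_iUnion, Set.mem_univ, iff_true]
    obtain ⟨i, hi⟩ := h y y.2
    exact ⟨i, hi⟩
  obtain ⟨i, hi⟩ := nonempty_interior_of_iUnion_of_closed
    (fun i => ((p i).comap W.subtype).closed_of_finiteDimensional) hcover
  have htop := Submodule.eq_top_of_nonempty_interior' _ hi
  refine hp i (fun x hx => ?_)
  have : (⟨x, hx⟩ : W) ∈ (p i).comap W.subtype := htop ▸ Submodule.mem_top
  exact this

lemma notmem_of_orthogonal {n : ℕ} {V : Submodule ℝ (E n)} {u : E n}
    (hu : u ∈ Vᗮ) (hu0 : u ≠ 0) : u ∉ V := fun h =>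
  hu0 (inner_self_eq_zero.mp ((Submodule.mem_orthogonal V u).mp hu u h))

lemma rank_step {n : ℕ} {V : Submodule ℝ (E n)} {i : ℕ} (hVr : finrank ℝ V = i)
    {u : E n} (hu : u ∈ Vᗮ) (hu0 : u ≠ 0) :
    finrank ℝ ↥(V ⊔ (ℝ ∙ u)) = i + 1 := by
  have huV : u ∉ V := notmem_of_orthogonal hu hu0
  have hdisj : V ⊓ (ℝ ∙ u) = ⊥ := by
    rw [eq_bot_iff]
    rintro x hx
    rw [Submodule.mem_inf] at hx
    obtain ⟨hxV, hxu⟩ := hx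
    obtain ⟨c, rfl⟩ := Submodule.mem_span_singleton.mp hxu
    rcases eq_or_ne c 0 with rfl | hc
    · simp
    · exact absurd (by simpa [smul_smul, inv_mul_cancel₀ hc] using V.smul_mem c⁻¹ hxV) huV
  have h := Submodule.finrank_sup_add_finrank_inf_eq V (ℝ ∙ u)
  rw [hdisj, finrank_bot, hVr, finrank_span_singleton hu0] at h
  omega

lemma step_lemma {n : ℕ} {V L : Submodule ℝ (E n)} {i : ℕ}
    (hVr : finrank ℝ V = i)
    (hVL : finrank ℝ ↥(V ⊓ L) = i - (n - finrank ℝ L))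
    {u : E n} (hu : u ∈ Vᗮ) (hu0 : u ≠ 0)
    (havoid : i < n - finrank ℝ L → u ∉ V ⊔ L) :
    finrank ℝ ↥((V ⊔ (ℝ ∙ u)) ⊓ L) = (i + 1) - (n - finrank ℝ L) := by
  have hln : finrank ℝ L ≤ n := by
    have := Submodule.finrank_le L; rwa [finrank_E] at this
  have hfr : finrank ℝ ↥(V ⊔ (ℝ ∙ u)) = i + 1 := rank_step hVr hu hu0
  by_cases hc : n - finrank ℝ L ≤ i
  · have e1 := Submodule.finrank_sup_add_finrank_inf_eq (V ⊔ (ℝ ∙ u)) L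
    have e2 := Submodule.finrank_sup_add_finrank_inf_eq ((V ⊔ (ℝ ∙ u)) ⊓ L) V
    have h3 : ((V ⊔ (ℝ ∙ u)) ⊓ L) ⊓ V = V ⊓ L :=
      le_antisymm (le_inf inf_le_right (le_trans inf_le_left inf_le_right))
        (le_inf (le_inf (le_trans inf_le_left le_sup_left) inf_le_right) inf_le_left)
    have h4 : finrank ℝ ↥(((V ⊔ (ℝ ∙ u)) ⊓ L) ⊔ V) ≤ i + 1 := by
      have hle : ((V ⊔ (ℝ ∙ u)) ⊓ L) ⊔ V ≤ V ⊔ (ℝ ∙ u) := sup_le inf_le_left le_sup_left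
      have := Submodule.finrank_mono hle
      omega
    have h5 : finrank ℝ ↥((V ⊔ (ℝ ∙ u)) ⊔ L) ≤ n := by
      have := Submodule.finrank_le ((V ⊔ (ℝ ∙ u)) ⊔ L); rwa [finrank_E] at this
    rw [h3, hVr] at e2
    rw [hfr] at e1
    omega
  · push_neg at hc
    have hbot : V ⊓ L = ⊥ := by
      have h0 : finrank ℝ ↥(V ⊓ L) = 0 := by omega
      exact Submodule.finrank_eq_zero.mp h0
    have hbot2 : (V ⊔ (ℝ ∙ u)) ⊓ L = ⊥ := by
      rw [eq_bot_iff]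
      rintro x hx
      rw [Submodule.mem_inf] at hx
      obtain ⟨hx1, hxL⟩ := hx
      rw [Submodule.mem_sup] at hx1
      obtain ⟨w, hw, z, hz, rfl⟩ := hx1
      obtain ⟨c, rfl⟩ := Submodule.mem_span_singleton.mp hz
      rcases eq_or_ne c 0 with rfl | hcne
      · rw [zero_smul, add_zero] at hxL ⊢
        have : w ∈ V ⊓ L := Submodule.mem_inf.mpr ⟨hw, hxL⟩
        rw [hbot] at this
        simpa using this
      · exfalso
        apply havoid hc
        have hcu : c • u ∈ V ⊔ L := by
          have h1 : w + c • u ∈ V ⊔ L := Submodule.mem_sup_right hxL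
          have h2 : w + c • u - w = c • u := add_sub_cancel_left w (c • u)
          exact h2 ▸ sub_mem h1 (Submodule.mem_sup_left hw)
        have := (V ⊔ L).smul_mem c⁻¹ hcu
        rwa [smul_smul, inv_mul_cancel₀ hcne, one_smul] at this
    rw [hbot2, finrank_bot]
    omega

lemma choose_u {n : ℕ} (A : Finset (E n)) (hess : interSub n A = ⊥)
    (V : Submodule ℝ (E n)) {i : ℕ} (hi : i < n) (hVr : finrank ℝ V = i) :
    ∃ u : E n, ‖u‖ = 1 ∧ u ∈ Vᗮ ∧
      ∀ S ⊆ A, i < n - finrank ℝ ↥(interSub n S) → u ∉ V ⊔ interSub n S := by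
  set ι := {S : Finset (E n) // S ⊆ A ∧ i < n - finrank ℝ ↥(interSub n S)} with hι
  haveI : Finite ι := by
    have hfin : {S : Finset (E n) | S ⊆ A ∧ i < n - finrank ℝ ↥(interSub n S)}.Finite :=
      A.powerset.finite_toSet.subset
        (fun S hS => Finset.mem_coe.mpr (Finset.mem_powerset.mpr hS.1))
    exact hfin.to_subtype
  have hp : ∀ S : ι, ¬ Vᗮ ≤ V ⊔ interSub n S.1 := by
    rintro ⟨S, hSA, hSlt⟩ hle
    have htop : V ⊔ interSub n S = ⊤ := by
      refine eq_top_iff.mpr ?_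
      rw [← Submodule.sup_orthogonal_of_hasOrthogonalProjection (K := V)]
      exact sup_le le_sup_left hle
    have h1 := Submodule.finrank_sup_add_finrank_inf_eq V (interSub n S)
    rw [htop, finrank_top, finrank_E] at h1
    have h2 := Submodule.finrank_le (interSub n S)
    rw [finrank_E] at h2
    omega
  obtain ⟨x, hxW, hx⟩ := avoid Vᗮ (fun S : ι => V ⊔ interSub n S.1) hp
  have hxV : x ∉ V := by
    have := hx ⟨A, subset_rfl, by rw [hess, finrank_bot]; omega⟩
    rwa [hess, sup_bot_eq] at this
  have hx0 : x ≠ 0 := fun h => hxV (h ▸ V.zero_mem)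
  refine ⟨‖x‖⁻¹ • x, norm_smul_inv_norm hx0, Vᗮ.smul_mem _ hxW, ?_⟩
  intro S hSA hSlt hmem
  have := (V ⊔ interSub n S).smul_mem ‖x‖ hmem
  rw [smul_smul, mul_inv_cancel₀ (norm_ne_zero_iff.mpr hx0), one_smul] at this
  exact hx ⟨S, hSA, hSlt⟩ this

lemma snoc_image_lt {n i j : ℕ} (hj : j ≤ i) (w : Fin i → E n) (u : E n) :
    (Fin.snoc w u : Fin (i + 1) → E n) '' {k : Fin (i + 1) | (k : ℕ) < j}
      = w '' {k : Fin i | (k : ℕ) < j} := by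
  ext x
  constructor
  · rintro ⟨k, hk, rfl⟩
    have hk' : (k : ℕ) < j := hk
    have hki : (k : ℕ) < i := lt_of_lt_of_le hk' hj
    refine ⟨⟨k, hki⟩, hk', ?_⟩
    conv_rhs => rw [show k = Fin.castSucc ⟨(k : ℕ), hki⟩ from Fin.ext rfl, Fin.snoc_castSucc]
  · rintro ⟨k, hk, rfl⟩
    exact ⟨Fin.castSucc k, hk, Fin.snoc_castSucc _ _ _⟩

lemma snoc_image_all {n i : ℕ} (w : Fin i → E n) (u : E n) :
    (Fin.snoc w u : Fin (i + 1) → E n) '' {k : Fin (i + 1) | (k : ℕ) < i + 1}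
      = insert u (w '' {k : Fin i | (k : ℕ) < i}) := by
  ext x
  constructor
  · rintro ⟨k, -, rfl⟩
    induction k using Fin.lastCases with
    | last => rw [Fin.snoc_last]; exact Set.mem_insert _ _
    | cast k => rw [Fin.snoc_castSucc]; exact Set.mem_insert_of_mem _ ⟨k, k.isLt, rfl⟩
  · rintro (rfl | ⟨k, -, rfl⟩)
    · exact ⟨Fin.last i, (Fin.last i).isLt, Fin.snoc_last _ _⟩
    · exact ⟨Fin.castSucc k, (Fin.castSucc k).isLt, Fin.snoc_castSucc _ _ _⟩

lemma orthonormal_snoc {n i : ℕ} {w : Fin i → E n} (hw : Orthonormal ℝ w)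
    {u : E n} (hu1 : ‖u‖ = 1) (hperp : ∀ k, ⟪w k, u⟫_ℝ = 0) :
    Orthonormal ℝ (Fin.snoc w u : Fin (i + 1) → E n) := by
  rw [orthonormal_iff_ite] at hw ⊢
  intro a b
  induction a using Fin.lastCases with
  | last =>
    induction b using Fin.lastCases with
    | last =>
      rw [Fin.snoc_last, if_pos rfl, real_inner_self_eq_norm_mul_norm, hu1, one_mul]
    | cast b =>
      rw [Fin.snoc_last, Fin.snoc_castSucc,
        if_neg (Ne.symm (Fin.ne_of_lt (Fin.castSucc_lt_last b))), real_inner_comm, hperp b]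
  | cast a =>
    induction b using Fin.lastCases with
    | last =>
      rw [Fin.snoc_last, Fin.snoc_castSucc, if_neg (Fin.ne_of_lt (Fin.castSucc_lt_last a)),
        hperp a]
    | cast b =>
      rw [Fin.snoc_castSucc, Fin.snoc_castSucc]
      by_cases hab : a = b
      · subst hab; rw [if_pos rfl]; simpa using hw a a
      · rw [if_neg (fun h => hab (Fin.castSucc_inj.mp h))]
        simpa [hab] using hw a b

lemma build {n : ℕ} (A : Finset (E n)) (hess : interSub n A = ⊥)
    (v : E n) (hv : v ∈ hypComp n A) (hv1 : ‖v‖ = 1) :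
    ∀ i, i ≤ n → ∃ w : Fin i → E n, Orthonormal ℝ w ∧ (∀ h : 0 < i, w ⟨0, h⟩ = v) ∧
      ∀ j ≤ i, ∀ S ⊆ A,
        finrank ℝ ↥(Submodule.span ℝ (w '' {k : Fin i | (k : ℕ) < j}) ⊓ interSub n S)
          = j - (n - finrank ℝ ↥(interSub n S)) := by
  intro i
  induction i with
  | zero =>
    intro _
    refine ⟨fun k => k.elim0, ?_, fun h => absurd h (lt_irrefl 0), ?_⟩
    · rw [orthonormal_iff_ite]; intro a; exact a.elim0
    · intro j hj S hS
      have hj0 : j = 0 := Nat.le_zero.mp hj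
      subst hj0
      have hempty : ((fun k : Fin 0 => k.elim0) '' {k : Fin 0 | (k : ℕ) < 0}) = (∅ : Set (E n)) := by
        simp [Set.eq_empty_of_isEmpty]
      rw [hempty, Submodule.span_empty, bot_inf_eq, finrank_bot]
      omega
  | succ i ih =>
    intro hi1
    have hi : i < n := hi1
    obtain ⟨w, hw, hw0, hinv⟩ := ih (le_of_lt hi)
    set V := Submodule.span ℝ (w '' {k : Fin i | (k : ℕ) < i}) with hVdef
    have himage : (w '' {k : Fin i | (k : ℕ) < i}) = Set.range w := by
      rw [show {k : Fin i | (k : ℕ) < i} = Set.univ from Set.eq_univ_of_forall (fun k => k.isLt),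
        Set.image_univ]
    have hVr : finrank ℝ V = i := by
      rw [hVdef, himage, finrank_span_eq_card hw.linearIndependent, Fintype.card_fin]
    have hmemV : ∀ k : Fin i, w k ∈ V := fun k =>
      Submodule.subset_span ⟨k, k.isLt, rfl⟩
    have hchoice : ∃ u : E n, ‖u‖ = 1 ∧ u ∈ Vᗮ ∧
        (∀ S ⊆ A, i < n - finrank ℝ ↥(interSub n S) → u ∉ V ⊔ interSub n S) ∧
        (i = 0 → u = v) := by
      rcases Nat.eq_zero_or_pos i with h0' | hpos
      · subst h0'
        have hVbot : V = ⊥ := Submodule.finrank_eq_zero.mp hVr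
        refine ⟨v, hv1, ?_, ?_, fun _ => rfl⟩
        · rw [hVbot, Submodule.bot_orthogonal_eq_top]; trivial
        · intro S hS hlt hmem
          rw [hVbot, bot_sup_eq] at hmem
          have hSne : S.Nonempty := by
            rcases S.eq_empty_or_nonempty with rfl | h
            · exfalso
              have : interSub n ∅ = ⊤ := by simp [interSub]
              rw [this, finrank_top, finrank_E] at hlt
              omega
            · exact h
          obtain ⟨α, hα⟩ := hSne
          have hαA : α ∈ A := hS hα
          have hvo : v ∈ (ℝ ∙ α)ᗮ := by
            have hle : interSub n S ≤ (ℝ ∙ α)ᗮ := le_trans (iInf_le _ α) (iInf_le _ hα)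
            exact hle hmem
          exact hv α hαA (Submodule.mem_orthogonal_singleton_iff_inner_right.mp hvo)
      · obtain ⟨u, h1, h2, h3⟩ := choose_u A hess V hi hVr
        exact ⟨u, h1, h2, h3, fun h => absurd h (by omega)⟩
    obtain ⟨u, hu1, huV, huav, hufirst⟩ := hchoice
    have hu0 : u ≠ 0 := fun h => by rw [h, norm_zero] at hu1; exact one_ne_zero hu1.symm
    have hperp : ∀ k, ⟪w k, u⟫_ℝ = 0 := fun k =>
      (Submodule.mem_orthogonal V u).mp huV (w k) (hmemV k)
    refine ⟨Fin.snoc w u, orthonormal_snoc hw hu1 hperp, ?_, ?_⟩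
    · intro h
      rcases Nat.eq_zero_or_pos i with h0' | hpos
      · subst h0'
        have heq : (⟨0, h⟩ : Fin 1) = Fin.last 0 := rfl
        rw [heq, Fin.snoc_last]
        exact hufirst rfl
      · have heq : (⟨0, h⟩ : Fin (i + 1)) = Fin.castSucc ⟨0, hpos⟩ := rfl
        rw [heq, Fin.snoc_castSucc]
        exact hw0 hpos
    · intro j hj S hS
      rcases Nat.lt_or_ge j (i + 1) with hji | hji
      · have hji' : j ≤ i := Nat.lt_succ_iff.mp hji
        rw [snoc_image_lt hji' w u]
        exact hinv j hji' S hS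
      · have hjeq : j = i + 1 := le_antisymm hj hji
        subst hjeq
        rw [snoc_image_all w u, Submodule.span_insert, ← hVdef, sup_comm]
        exact step_lemma hVr (hinv i le_rfl S hS) huV hu0 (huav S hS)

lemma main_frame {n : ℕ} (hn : 0 < n) (A : Finset (E n)) (hess : interSub n A = ⊥)
    (v : E n) (hv : v ∈ hypComp n A) (hv1 : ‖v‖ = 1) :
    ∃ b : OrthonormalBasis (Fin n) ℝ (E n), IsGenericFrame n A ⇑b ∧ b ⟨0, hn⟩ = v := by
  obtain ⟨w, hw, hw0, hinv⟩ := build A hess v hv hv1 n le_rfl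
  have himage : (w '' {k : Fin n | (k : ℕ) < n}) = Set.range w := by
    rw [show {k : Fin n | (k : ℕ) < n} = Set.univ from Set.eq_univ_of_forall (fun k => k.isLt),
      Set.image_univ]
  have hspan : Submodule.span ℝ (Set.range w) = ⊤ := by
    have h1 := hinv n le_rfl ∅ (Finset.empty_subset A)
    have h2 : interSub n ∅ = ⊤ := by simp [interSub]
    rw [h2, inf_top_eq, himage, finrank_top, finrank_E] at h1
    refine Submodule.eq_top_of_finrank_eq ?_
    rw [finrank_E, h1]
    omega
  refine ⟨OrthonormalBasis.mk hw hspan.ge, ?_, ?_⟩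
  · intro i h1 h2 S hS
    rw [show ⇑(OrthonormalBasis.mk hw hspan.ge) = w from OrthonormalBasis.coe_mk hw hspan.ge]
    exact hinv i h2 S hS
  · rw [show ⇑(OrthonormalBasis.mk hw hspan.ge) = w from OrthonormalBasis.coe_mk hw hspan.ge]
    exact hw0 hn

/-- For a central essential arrangement, every unit vector `v` in a chamber is the
first vector of some generic orthonormal frame; in particular generic orthonormal
frames exist. -/
theorem exists_generic_frame (n : ℕ) (hn : 0 < n) (A : Finset (E n))
    (h0 : (0 : E n) ∉ A) (hess : interSub n A = ⊥) :
    (∀ C : Set (E n), IsChamber n A C → ∀ v ∈ C, ‖v‖ = 1 →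
      ∃ b : OrthonormalBasis (Fin n) ℝ (E n),
        IsGenericFrame n A ⇑b ∧ b ⟨0, hn⟩ = v) ∧
    ∃ b : OrthonormalBasis (Fin n) ℝ (E n), IsGenericFrame n A ⇑b := by
  constructor
  · rintro C ⟨x, hx, rfl⟩ v hvC hv1
    exact main_frame hn A hess v (connectedComponentIn_subset _ _ hvC) hv1
  · -- find a point in the complement of the hyperplanes
    haveI : Finite {α : E n // α ∈ A} := Finset.finite_toSet A |>.to_subtype
    have hp : ∀ α : {α : E n // α ∈ A}, ¬ (⊤ : Submodule ℝ (E n)) ≤ (ℝ ∙ (α : E n))ᗮ := by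
      rintro ⟨α, hα⟩ hle
      have hmem : α ∈ (ℝ ∙ α)ᗮ := hle Submodule.mem_top
      have : ⟪α, α⟫_ℝ = 0 := Submodule.mem_orthogonal_singleton_iff_inner_right.mp hmem
      exact h0 (inner_self_eq_zero.mp this ▸ hα)
    obtain ⟨x, -, hx⟩ := avoid (⊤ : Submodule ℝ (E n)) (ι := {α : E n // α ∈ A}) (fun α => (ℝ ∙ (α : E n))ᗮ) hp
    have hhyp : x ∈ hypComp n A := by
      intro α hα hinner
      exact hx ⟨α, hα⟩ (Submodule.mem_orthogonal_singleton_iff_inner_right.mpr hinner)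
    have hAne : A.Nonempty := by
      rcases A.eq_empty_or_nonempty with rfl | h
      · exfalso
        have h2 : interSub n ∅ = ⊤ := by simp [interSub]
        rw [h2] at hess
        have htop : finrank ℝ ↥(⊤ : Submodule ℝ (E n)) = finrank ℝ ↥(⊥ : Submodule ℝ (E n)) := by
          rw [hess]
        rw [finrank_top, finrank_E, finrank_bot] at htop
        omega
      · exact h
    obtain ⟨α, hα⟩ := hAne
    have hx0 : x ≠ 0 := by
      intro h
      exact hhyp α hα (by rw [h, inner_zero_right])
    have hv : ‖x‖⁻¹ • x ∈ hypComp n A := by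
      intro β hβ
      rw [inner_smul_right]
      exact mul_ne_zero (inv_ne_zero (norm_ne_zero_iff.mpr hx0)) (hhyp β hβ)
    obtain ⟨b, hb, -⟩ := main_frame hn A hess _ hv (norm_smul_inv_norm hx0)
    exact ⟨b, hb⟩
end
end
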